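/- Let d ≥ 2 and for x ∈ ℝ^d define the (d−1)×(d−1) matrix N(x) = diag(x₁,…,x_{d−1}) + x_d · J, where J is the all-ones matrix; i.e., N(x)ᵢᵢ = xᵢ + x_d and N(x)ᵢⱼ = x_d for i ≠ j. Then det N(x) = E_{d−1}(x₁,…,x_d) as a polynomial identity, where E_{d−1} is the (d−1)-st elementary symmetric polynomial in d variables. (This is the determinantal representation underlying the first derivative cone of the nonnegative orthant ℝ^d₊ with hyperbolic polynomial x₁x₂⋯x_d.) -/

import Mathlib

/-- The `k`-th elementary symmetric function of `x : Fin d → ℝ`. -/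
noncomputable def esymm {d : ℕ} (k : ℕ) (x : Fin d → ℝ) : ℝ :=
  ∑ s ∈ Finset.powersetCard k (Finset.univ : Finset (Fin d)), ∏ i ∈ s, x i

lemma aux1 {n : ℕ} (a : Fin n → ℝ) (i : Fin n) :
    ((Matrix.diagonal a).updateRow i (fun _ => (1:ℝ))).det
      = ∏ j ∈ Finset.univ.erase i, a j := by
  have h1 : (fun _ : Fin n => (1:ℝ)) = ∑ k : Fin n, Pi.single k (1:ℝ) := by
    funext j; simp [Finset.sum_pi_single']
  rw [h1]
  have h2 : ((Matrix.diagonal a).updateRow i (∑ k : Fin n, Pi.single k (1:ℝ))).det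
      = ∑ k : Fin n, ((Matrix.diagonal a).updateRow i (Pi.single k (1:ℝ))).det :=
    (Matrix.detRowAlternating (R := ℝ) (n := Fin n)).map_update_sum Finset.univ i
      (fun k => Pi.single k (1:ℝ)) (Matrix.diagonal a)
  rw [h2, Finset.sum_eq_single i]
  · have : (Matrix.diagonal a).updateRow i (Pi.single i (1:ℝ))
        = Matrix.diagonal (Function.update a i 1) := by
      ext j k
      rcases eq_or_ne j i with rfl | hj
      · simp [Pi.single_apply, Matrix.diagonal_apply, Function.update_apply, eq_comm]
      · simp [hj, Matrix.diagonal_apply, Function.update_apply]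
    rw [this, Matrix.det_diagonal, Finset.prod_update_of_mem (Finset.mem_univ i), one_mul,
      Finset.sdiff_singleton_eq_erase]
  · intro k _ hk
    apply Matrix.det_eq_zero_of_column_eq_zero i
    intro j
    rcases eq_or_ne j i with rfl | hj
    · simp [Pi.single_apply, Ne.symm hk]
    · simp [hj, Matrix.diagonal_apply, hj]
  · simp

lemma aux2 {n : ℕ} (a : Fin n → ℝ) (t : ℝ) :
    (Matrix.of fun i j : Fin n => if i = j then a i + t else t).det
      = ∏ i, a i + t * ∑ i : Fin n, ∏ j ∈ Finset.univ.erase i, a j := by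
  set m : Fin n → Fin n → ℝ := fun i => Pi.single i (a i) with hm
  set m' : Fin n → Fin n → ℝ := fun _ _ => t with hm'
  have hM : (Matrix.of fun i j : Fin n => if i = j then a i + t else t) = Matrix.of (m + m') := by
    ext i j
    rcases eq_or_ne i j with rfl | h
    · simp [m, m']
    · simp [m, m', h, Pi.single_apply, Ne.symm h]
  have hsplit : (Matrix.of (m + m')).det
      = ∑ s : Finset (Fin n), (Matrix.of (s.piecewise m m')).det :=
    (Matrix.detRowAlternating (R := ℝ) (n := Fin n)).toMultilinearMap.map_add_univ m m'
  rw [hM, hsplit]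
  set A : Finset (Finset (Fin n)) :=
    insert Finset.univ (Finset.univ.image fun i => Finset.univ.erase i) with hA
  have hzero : ∀ s ∈ (Finset.univ : Finset (Finset (Fin n))), s ∉ A →
      (Matrix.of (s.piecewise m m')).det = 0 := by
    intro s _ hs
    simp only [hA, Finset.mem_insert, Finset.mem_image, not_or, not_exists] at hs
    obtain ⟨hs1, hs2⟩ := hs
    have hcard : 2 ≤ (Finset.univ \ s).card := by
      by_contra h
      push_neg at h
      rcases Finset.eq_empty_or_nonempty (Finset.univ \ s) with he | ⟨i, hi⟩
      · exact hs1 (Finset.eq_univ_of_forall fun x => by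
          by_contra hx
          exact Finset.notMem_empty x (he ▸ Finset.mem_sdiff.mpr ⟨Finset.mem_univ x, hx⟩))
      · have h1 : (Finset.univ \ s).card = 1 :=
          le_antisymm (by omega) (Finset.card_pos.mpr ⟨i, hi⟩)
        obtain ⟨j, hj⟩ := Finset.card_eq_one.mp h1
        refine hs2 j ⟨Finset.mem_univ j, ?_⟩
        have hss : s = Finset.univ \ (Finset.univ \ s) :=
          (Finset.sdiff_sdiff_eq_self (Finset.subset_univ s)).symm
        rw [hss, hj, Finset.sdiff_singleton_eq_erase]
    obtain ⟨i, hi, j, hj, hij⟩ := Finset.one_lt_card.mp hcard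
    have hi' : i ∉ s := (Finset.mem_sdiff.mp hi).2
    have hj' : j ∉ s := (Finset.mem_sdiff.mp hj).2
    apply Matrix.det_zero_of_row_eq hij
    show s.piecewise m m' i = s.piecewise m m' j
    rw [Finset.piecewise_eq_of_notMem _ _ _ hi', Finset.piecewise_eq_of_notMem _ _ _ hj']
  rw [← Finset.sum_subset (Finset.subset_univ A) hzero]
  have huniv : Finset.univ ∉ Finset.univ.image fun i : Fin n => Finset.univ.erase i := by
    intro h
    obtain ⟨i, _, hi⟩ := Finset.mem_image.mp h
    have h2 := Finset.mem_univ i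
    rw [← hi] at h2
    exact Finset.notMem_erase i Finset.univ h2
  have hinj : ∀ i ∈ (Finset.univ : Finset (Fin n)), ∀ j ∈ (Finset.univ : Finset (Fin n)),
      Finset.univ.erase i = Finset.univ.erase j → i = j := by
    intro i _ j _ h
    by_contra hij
    have h2 : i ∈ Finset.univ.erase j := Finset.mem_erase.mpr ⟨hij, Finset.mem_univ i⟩
    rw [← h] at h2
    exact Finset.notMem_erase i Finset.univ h2
  rw [hA, Finset.sum_insert huniv, Finset.sum_image hinj]
  congr 1
  · rw [Finset.piecewise_univ]
    have : Matrix.of m = Matrix.diagonal a := by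
      ext i j
      simp [m, Pi.single_apply, Matrix.diagonal_apply, eq_comm]
    rw [this, Matrix.det_diagonal]
  · rw [Finset.mul_sum]
    refine Finset.sum_congr rfl fun i _ => ?_
    have hpw : Matrix.of ((Finset.univ.erase i).piecewise m m')
        = (Matrix.of m).updateRow i (fun _ => t) := by
      rw [Finset.piecewise_erase_univ]
      rfl
    have hdiag : Matrix.of m = Matrix.diagonal a := by
      ext i j
      simp [m, Pi.single_apply, Matrix.diagonal_apply, eq_comm]
    have hsm : (fun _ : Fin n => t) = t • (fun _ : Fin n => (1:ℝ)) := by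
      funext j; simp
    rw [hpw, hdiag, hsm, Matrix.det_updateRow_smul, aux1]

lemma esymm_pred {n : ℕ} (x : Fin (n+1) → ℝ) :
    esymm n x = ∑ i : Fin (n+1), ∏ j ∈ Finset.univ.erase i, x j := by
  have hps : Finset.powersetCard n (Finset.univ : Finset (Fin (n+1)))
      = Finset.univ.image fun i : Fin (n+1) => Finset.univ.erase i := by
    ext s
    simp only [Finset.mem_powersetCard, Finset.mem_image]
    constructor
    · rintro ⟨hsub, hcard⟩
      have h1 : (Finset.univ \ s).card = 1 := by
        rw [Finset.card_sdiff_of_subset hsub, hcard, Finset.card_univ, Fintype.card_fin]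
        omega
      obtain ⟨i, hi⟩ := Finset.card_eq_one.mp h1
      refine ⟨i, Finset.mem_univ i, ?_⟩
      have hss : s = Finset.univ \ (Finset.univ \ s) :=
        (Finset.sdiff_sdiff_eq_self hsub).symm
      rw [hss, hi, Finset.sdiff_singleton_eq_erase]
    · rintro ⟨i, _, rfl⟩
      refine ⟨Finset.erase_subset _ _, ?_⟩
      rw [Finset.card_erase_of_mem (Finset.mem_univ i), Finset.card_univ, Fintype.card_fin]
      omega
  have hinj : ∀ i ∈ (Finset.univ : Finset (Fin (n+1))), ∀ j ∈ (Finset.univ : Finset (Fin (n+1))),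
      Finset.univ.erase i = Finset.univ.erase j → i = j := by
    intro i _ j _ h
    by_contra hij
    have h2 : i ∈ Finset.univ.erase j := Finset.mem_erase.mpr ⟨hij, Finset.mem_univ i⟩
    rw [← h] at h2
    exact Finset.notMem_erase i Finset.univ h2
  rw [esymm, hps, Finset.sum_image hinj]

lemma erase_last {n : ℕ} :
    (Finset.univ : Finset (Fin (n+1))).erase (Fin.last n)
      = Finset.univ.image Fin.castSucc := by
  ext j
  simp only [Finset.mem_erase, Finset.mem_univ, and_true, Finset.mem_image, true_and]
  rw [← Fin.exists_castSucc_eq]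

lemma erase_castSucc {n : ℕ} (i : Fin (n+1)) :
    (Finset.univ : Finset (Fin (n+2))).erase i.castSucc
      = insert (Fin.last (n+1)) ((Finset.univ.erase i).image Fin.castSucc) := by
  have h1 : (Finset.univ : Finset (Fin (n+2)))
      = insert (Fin.last (n+1)) (Finset.univ.image Fin.castSucc) := by
    rw [← erase_last, Finset.insert_erase (Finset.mem_univ _)]
  have hne : Fin.last (n+1) ≠ i.castSucc := by
    simp [Fin.ext_iff]
    omega
  rw [h1, Finset.erase_insert_of_ne hne,
    ← Finset.image_erase (Fin.castSucc_injective _)]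

lemma sum_erase_split {n : ℕ} (x : Fin (n+2) → ℝ) :
    ∑ i : Fin (n+2), ∏ j ∈ Finset.univ.erase i, x j
      = ∏ i : Fin (n+1), x i.castSucc
        + x (Fin.last (n+1)) * ∑ i : Fin (n+1), ∏ j ∈ Finset.univ.erase i, x j.castSucc := by
  rw [Fin.sum_univ_castSucc]
  rw [add_comm]
  congr 1
  · rw [erase_last, Finset.prod_image (fun i _ j _ h => Fin.castSucc_injective _ h)]
  · rw [Finset.mul_sum]
    refine Finset.sum_congr rfl fun i _ => ?_
    rw [erase_castSucc i, Finset.prod_insert (by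
        intro hmem
        obtain ⟨j, _, hj⟩ := Finset.mem_image.mp hmem
        have hv := congrArg Fin.val hj
        simp at hv
        omega),
      Finset.prod_image (fun a _ b _ h => Fin.castSucc_injective _ h)]

/-- For the `(d-1) × (d-1)` matrix `N(x) = diag(x₁,…,x_{d-1}) + x_d ⬝ J` (with
`J` the all-ones matrix) one has `det N(x) = E_{d-1}(x₁,…,x_d)`: the
determinantal representation underlying the first derivative cone of the
nonnegative orthant. -/
theorem stmt16 {d : ℕ} (hd : 2 ≤ d) (x : Fin d → ℝ) :
    (Matrix.of fun i j : Fin (d - 1) =>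
        if i = j then x (Fin.castLE (by omega) i) + x ⟨d - 1, by omega⟩
        else x ⟨d - 1, by omega⟩).det
      = esymm (d - 1) x := by
  obtain ⟨n, rfl⟩ : ∃ n, d = n + 2 := ⟨d - 2, by omega⟩
  have h1 : n + 2 - 1 = n + 1 := rfl
  rw [aux2]
  rw [show (esymm (n + 2 - 1) x : ℝ) = esymm (n+1) x from rfl, esymm_pred, sum_erase_split]
  congr 1
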